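/- Let V be a finite-dimensional complex vector space. (1) For every linear subspace 𝒮 of the space of linear endomorphisms of V, Refl(𝒮) ⊆ Alg Lat(𝒮), where Lat(𝒮) is the set of subspaces invariant under every member of 𝒮 and Alg Lat(𝒮) = {T : T M ⊆ M for every M ∈ Lat(𝒮)}. (2) If 𝒜 is a subalgebra of the endomorphism algebra of V containing the identity, then Alg Lat(𝒜) = Refl(𝒜). -/
import Mathlib


open Submodule

/-- A subspace `M` is invariant under the endomorphism `A`. -/
def InvSub {V : Type*} [AddCommGroup V] [Module ℂ V] (A : V →ₗ[ℂ] V)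
    (M : Submodule ℂ V) : Prop :=
  M.map A ≤ M

/-- The reflexive cover of a set `𝒮` of linear maps. -/
def Refl {V W : Type*} [AddCommGroup V] [Module ℂ V] [AddCommGroup W] [Module ℂ W]
    (𝒮 : Set (V →ₗ[ℂ] W)) : Set (V →ₗ[ℂ] W) :=
  {T | ∀ x : V, ∃ S ∈ 𝒮, T x = S x}

/-- `Alg Lat 𝒮`: all endomorphisms leaving invariant every subspace which is
invariant under every member of `𝒮`. -/
def AlgLat {V : Type*} [AddCommGroup V] [Module ℂ V] (𝒮 : Set (V →ₗ[ℂ] V)) :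
    Set (V →ₗ[ℂ] V) :=
  {T | ∀ M : Submodule ℂ V, (∀ S ∈ 𝒮, InvSub S M) → InvSub T M}

theorem stmt9 {V : Type*} [AddCommGroup V] [Module ℂ V] [FiniteDimensional ℂ V] :
    (∀ 𝒮 : Submodule ℂ (V →ₗ[ℂ] V), Refl (𝒮 : Set (V →ₗ[ℂ] V)) ⊆ AlgLat (𝒮 : Set (V →ₗ[ℂ] V))) ∧
    (∀ 𝒜 : Subalgebra ℂ (Module.End ℂ V),
      AlgLat (𝒜 : Set (V →ₗ[ℂ] V)) = Refl (𝒜 : Set (V →ₗ[ℂ] V))) := by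

  have refl_sub : ∀ 𝒮 : Set (V →ₗ[ℂ] V), Refl 𝒮 ⊆ AlgLat 𝒮 := by
    intro 𝒮 T hT M hM
    intro y hy
    rcases Submodule.mem_map.mp hy with ⟨x, hx, rfl⟩
    obtain ⟨S, hS, hSx⟩ := hT x
    rw [hSx]
    exact hM S hS (Submodule.mem_map_of_mem hx)
  refine ⟨fun 𝒮 => refl_sub _, fun 𝒜 => le_antisymm ?_ (refl_sub _)⟩
  intro T hT x
  set M : Submodule ℂ V := (Subalgebra.toSubmodule 𝒜).map (LinearMap.applyₗ x)
  have hx : x ∈ M := ⟨1, Subalgebra.one_mem 𝒜, by simp⟩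
  have hinv : ∀ S ∈ (𝒜 : Set (V →ₗ[ℂ] V)), InvSub S M := by
    intro S hS y hy
    rcases Submodule.mem_map.mp hy with ⟨z, hz, rfl⟩
    rcases Submodule.mem_map.mp hz with ⟨A, hA, rfl⟩
    exact ⟨S * A, 𝒜.mul_mem hS hA, rfl⟩
  have := hT M hinv (Submodule.mem_map_of_mem hx)
  rcases Submodule.mem_map.mp this with ⟨A, hA, hAx⟩
  exact ⟨A, hA, hAx.symm⟩
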